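/- Fix U ∈ ℝ. For every ε > 0 there exists R > 0 such that for every k ∈ ℂ with Re k ≥ 1/4, Im k ≤ 0 and |k| ≥ R, the complex number s(k) = 1 + 1/k − U²/k³ does not lie in the closed negative real axis (−∞, 0], and, defining ω_±(k) = (U ± k²·√(s(k)))/(1 + 1/k) with the principal branch of the complex square root, one has |ω_+(k) − (k² − k/2 + U + 3/8)| < ε and |ω_−(k) − (−k² + k/2 + U − 3/8)| < ε. -/

import Mathlib

/-- The radicand `s(k) = 1 + 1/k − U²/k³`. -/
noncomputable def plateRad (U : ℝ) (k : ℂ) : ℂ := 1 + 1 / k - (U : ℂ) ^ 2 / k ^ 3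

/-- The dispersion root `ω₊(k) = (U + k²√(s(k)))/(1+1/k)` (principal branch). -/
noncomputable def plateOmegaPC (U : ℝ) (k : ℂ) : ℂ :=
  ((U : ℂ) + k ^ 2 * plateRad U k ^ ((1 : ℂ) / 2)) / (1 + 1 / k)

/-- The dispersion root `ω₋(k) = (U − k²√(s(k)))/(1+1/k)` (principal branch). -/
noncomputable def plateOmegaMC (U : ℝ) (k : ℂ) : ℂ :=
  ((U : ℂ) - k ^ 2 * plateRad U k ^ ((1 : ℂ) / 2)) / (1 + 1 / k)

private lemma plate_final_bound {x d ak B ε : ℝ} (hx : 0 ≤ x) (hd : 7/8 ≤ d) (hak : 8 ≤ ak)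
    (h1 : x * (d * ak) ≤ B) (h2 : 4*B ≤ ak*ε) (hε : 0 < ε) : x < ε := by
  have hak0 : (0:ℝ) < ak := by linarith
  have h1' : x * ((7/8) * ak) ≤ B := by
    nlinarith [mul_nonneg (mul_nonneg hx hak0.le) (by linarith : (0:ℝ) ≤ d - 7/8)]
  by_contra hc
  push_neg at hc
  have h5 : ε * ((7/8)*ak) ≤ x * ((7/8)*ak) :=
    mul_le_mul_of_nonneg_right hc (by positivity)
  have h6 : ε * ((7/8)*ak) = (7/8)*(ak*ε) := by ring
  rw [h6] at h5
  linarith [mul_pos hak0 hε]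

set_option maxHeartbeats 1000000 in
/-- asymptotics of the dispersion roots in the domain
`D = {k : Re k ≥ 1/4, Im k ≤ 0}`: for every `ε > 0` there is `R > 0` so that for `|k| ≥ R`
in `D`, the radicand `s(k)` avoids `(−∞, 0]` and
`|ω₊(k) − (k² − k/2 + U + 3/8)| < ε`, `|ω₋(k) − (−k² + k/2 + U − 3/8)| < ε`. -/
theorem omega_asymptotics_complex (U : ℝ) :
    ∀ ε : ℝ, 0 < ε → ∃ R : ℝ, 0 < R ∧ ∀ k : ℂ,
      1 / 4 ≤ k.re → k.im ≤ 0 → R ≤ ‖k‖ →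
      (¬ ((plateRad U k).im = 0 ∧ (plateRad U k).re ≤ 0))
      ∧ ‖plateOmegaPC U k - (k ^ 2 - k / 2 + (U : ℂ) + 3 / 8)‖ < ε
      ∧ ‖plateOmegaMC U k - (-k ^ 2 + k / 2 + (U : ℂ) - 3 / 8)‖ < ε := by
  intro ε hε
  set B : ℝ := 2 + U^2 + |U| with hBdef
  have hB2 : 2 ≤ B := by nlinarith [sq_nonneg U, abs_nonneg U]
  refine ⟨max (8*(1+U^2)) (4*B/ε), lt_of_lt_of_le (by positivity) (le_max_left _ _), ?_⟩
  intro k hre him habs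
  set ak := ‖k‖ with hakdef
  have hak8U : 8*(1+U^2) ≤ ak := le_trans (le_max_left _ _) habs
  have hak4B : 4*B/ε ≤ ak := le_trans (le_max_right _ _) habs
  have hak8 : 8 ≤ ak := by nlinarith [sq_nonneg U]
  have hak0 : (0:ℝ) < ak := by linarith
  have hk0 : k ≠ 0 := by
    intro h
    rw [hakdef, h, norm_zero] at hak0
    exact lt_irrefl 0 hak0
  set s := plateRad U k with hsdef
  -- |s - 1| ≤ (1+U²)/ak ≤ 1/8
  have hsub : s - 1 = 1/k - (U:ℂ)^2/k^3 := by rw [hsdef]; unfold plateRad; ring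
  have habs_inv : ‖1/k‖ = 1/ak := by rw [norm_div, norm_one, ← hakdef]
  have hs1 : ‖s - 1‖ ≤ (1+U^2)/ak := by
    have habsU3 : ‖(U:ℂ)^2/k^3‖ = U^2/ak^3 := by
      rw [norm_div, norm_pow, norm_pow, Complex.norm_real, Real.norm_eq_abs, sq_abs, ← hakdef]
    rw [hsub, sub_eq_add_neg]
    refine le_trans (norm_add_le _ _) ?_
    rw [norm_neg, habs_inv, habsU3]
    have h3 : U^2/ak^3 ≤ U^2/ak := by
      gcongr
      nlinarith [mul_le_mul_of_nonneg_left hak8 hak0.le,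
        mul_le_mul_of_nonneg_left (mul_le_mul_of_nonneg_left hak8 hak0.le) hak0.le]
    have h4 : 1/ak + U^2/ak = (1+U^2)/ak := (add_div 1 (U^2) ak).symm
    linarith
  have hs18 : ‖s - 1‖ ≤ 1/8 := by
    refine hs1.trans ?_
    rw [div_le_div_iff₀ hak0 (by norm_num : (0:ℝ) < 8)]
    linarith
  -- conclusion 1
  have hcon1 : ¬ ((plateRad U k).im = 0 ∧ (plateRad U k).re ≤ 0) := by
    rintro ⟨-, hre'⟩
    have h := Complex.abs_re_le_norm (s - 1)
    rw [Complex.sub_re, Complex.one_re] at h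
    have h2 := abs_le.mp (h.trans hs18)
    rw [← hsdef] at hre'
    linarith [h2.1]
  refine ⟨hcon1, ?_⟩
  have hs0 : s ≠ 0 := by
    intro h
    rw [h, zero_sub, norm_neg, norm_one] at hs18
    norm_num at hs18
  set w := s ^ ((1:ℂ)/2) with hwdef
  have hww : w * w = s := by
    rw [hwdef, ← Complex.cpow_add _ _ hs0]; norm_num
  -- |w - 1| ≤ 1/2
  have hw1 : ‖w - 1‖ ≤ 1/2 := by
    have hlog : ‖Complex.log s‖ ≤ 3/2 * ‖s - 1‖ := by
      have h1 : (1:ℂ) + (s - 1) = s := by ring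
      have := Complex.norm_log_one_add_half_le_self (z := s - 1)
        (by linarith)
      rw [h1] at this
      exact this
    have hwexp : w = Complex.exp (Complex.log s * (1/2)) := Complex.cpow_def_of_ne_zero hs0 _
    have h12 : ‖(1:ℂ)/2‖ = 1/2 := by simp [norm_div]
    have habs2 : ‖Complex.log s * (1/2)‖ ≤ 1 := by
      rw [norm_mul, h12]
      nlinarith [norm_nonneg (s-1)]
    have := Complex.norm_exp_sub_one_le habs2
    rw [← hwexp, norm_mul, h12] at this
    nlinarith [norm_nonneg (s-1)]
  -- denominator bounds
  have habsd : 7/8 ≤ ‖1 + 1/k‖ := by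
    have t := norm_add_le (1 + 1/k) (-(1/k))
    rw [show (1 + 1/k) + (-(1/k)) = (1:ℂ) by ring, norm_one, norm_neg, habs_inv] at t
    have : 1/ak ≤ 1/8 := by rw [div_le_div_iff₀ hak0 (by norm_num : (0:ℝ) < 8)]; linarith
    linarith
  have hd0 : 1 + 1/k ≠ 0 := by
    intro h; rw [h, norm_zero] at habsd; linarith
  have h1k : 1 + k ≠ 0 := by
    intro h
    have hkeq : k = -1 := by linear_combination h
    have : ak = 1 := by rw [hakdef, hkeq, norm_neg, norm_one]
    linarith
  -- algebra with A = k² + k/2 - 1/8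
  set A := k^2 + k/2 - (1/8 : ℂ) with hAdef
  have hI1 : k^4 * s - A^2 = k * ((1/8:ℂ) - (U:ℂ)^2) - 1/64 := by
    rw [hsdef, hAdef]; unfold plateRad; field_simp; ring
  have habsI1 : ‖k^4 * s - A^2‖ ≤ ak*(1/8 + U^2) + 1/64 := by
    rw [hI1, sub_eq_add_neg]
    refine le_trans (norm_add_le _ _) ?_
    rw [norm_neg, norm_mul, ← hakdef]
    have e1 : ‖(1/8:ℂ) - (U:ℂ)^2‖ ≤ 1/8 + U^2 := by
      have hcast : ((1/8:ℂ) - (U:ℂ)^2) = (((1/8 - U^2 : ℝ)) : ℂ) := by push_cast; ring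
      rw [hcast, Complex.norm_real, Real.norm_eq_abs]
      rw [abs_le]; constructor <;> nlinarith [sq_nonneg U]
    have e2 : ‖(1:ℂ)/64‖ = 1/64 := by simp [norm_div]
    rw [e2]
    have := mul_le_mul_of_nonneg_left e1 hak0.le
    linarith
  have hlowbnd : ak^2 ≤ ‖k^2*w + A‖ := by
    have hid : (2:ℂ)*k^2 = (k^2*w + A) + (-(k^2*(w-1))) + (-(k/2 - 1/8)) := by
      rw [hAdef]; ring
    have t1 := congrArg norm hid
    have t2 := norm_add_le ((k^2*w + A) + (-(k^2*(w-1)))) (-(k/2 - 1/8))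
    have t3 := norm_add_le (k^2*w + A) (-(k^2*(w-1)))
    rw [← t1] at t2
    rw [norm_neg] at t2 t3
    have e1 : ‖(2:ℂ)*k^2‖ = 2*ak^2 := by
      rw [norm_mul, norm_pow, Complex.norm_two, ← hakdef]
    have e2 : ‖k^2*(w-1)‖ = ak^2 * ‖w-1‖ := by
      rw [norm_mul, norm_pow, ← hakdef]
    have e3 : ‖k/2 - 1/8‖ ≤ ak/2 + 1/8 := by
      rw [sub_eq_add_neg]
      refine le_trans (norm_add_le _ _) ?_
      rw [norm_neg]
      have e5 : ‖k/2‖ = ak/2 := by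
        rw [norm_div, Complex.norm_two, ← hakdef]
      have e4 : ‖(1:ℂ)/8‖ = 1/8 := by simp [norm_div]
      rw [e5, e4]
    rw [e1] at t2
    rw [e2] at t3
    nlinarith [mul_le_mul_of_nonneg_left hw1 (sq_nonneg ak),
      mul_nonneg (by linarith : (0:ℝ) ≤ ak - 8) hak0.le]
  have hprod : (k^2*w - A) * (k^2*w + A) = k^4*s - A^2 := by
    linear_combination k^4 * hww
  have habsWA : ‖k^2*w - A‖ ≤ (1+U^2)/ak := by
    have t := congrArg norm hprod
    rw [norm_mul] at t
    rw [le_div_iff₀ hak0]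
    have hxy : ‖k^2*w - A‖ * ak^2 ≤ ak*(1/8 + U^2) + 1/64 := by
      calc ‖k^2*w - A‖ * ak^2
          ≤ ‖k^2*w - A‖ * ‖k^2*w + A‖ :=
            mul_le_mul_of_nonneg_left hlowbnd (norm_nonneg _)
        _ = ‖k^4*s - A^2‖ := t
        _ ≤ ak*(1/8 + U^2) + 1/64 := habsI1
    nlinarith [norm_nonneg (k^2*w - A), sq_nonneg U]
  have hinv : (1 + k) * (1 + k)⁻¹ = 1 := mul_inv_cancel₀ h1k
  have h4B : 4*B ≤ ak*ε := (div_le_iff₀ hε).mp hak4B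
  have hmulWA : ak * ‖k^2*w - A‖ ≤ 1+U^2 := by
    have h := mul_le_mul_of_nonneg_left habsWA hak0.le
    have e : ak * ((1+U^2)/ak) = 1+U^2 := by field_simp
    rw [e] at h
    exact h
  constructor
  · -- plus root
    have hOP : plateOmegaPC U k = ((U:ℂ) + k ^ 2 * w) / (1 + 1 / k) := by
      rw [plateOmegaPC, ← hsdef, ← hwdef]
    have hEp : (plateOmegaPC U k - (k ^ 2 - k / 2 + (U : ℂ) + 3 / 8)) * ((1 + 1/k) * k)
        = k*(k^2*w - A) + (-((U:ℂ) + 3/8)) := by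
      rw [hOP, hAdef]
      field_simp
      linear_combination (16*(U:ℂ)*k + 16*k^3*w) * hinv
    have t := congrArg norm hEp
    rw [norm_mul, norm_mul, ← hakdef] at t
    have hcb : ‖-((U:ℂ) + 3/8)‖ ≤ 1/2 + |U| := by
      rw [norm_neg]
      have hcast : ((U:ℂ) + 3/8) = (((U + 3/8 : ℝ)) : ℂ) := by push_cast; ring
      rw [hcast, Complex.norm_real, Real.norm_eq_abs]
      calc |U + 3/8| ≤ |U| + |(3/8 : ℝ)| := abs_add_le _ _
        _ ≤ 1/2 + |U| := by rw [abs_of_nonneg (by norm_num : (0:ℝ) ≤ 3/8)]; linarith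
    have hnum : ‖k*(k^2*w - A) + (-((U:ℂ) + 3/8))‖ ≤ B := by
      refine le_trans (norm_add_le _ _) ?_
      rw [norm_mul, ← hakdef, hBdef]
      linarith
    rw [← t] at hnum
    exact plate_final_bound (norm_nonneg _) habsd hak8 hnum h4B hε
  · -- minus root
    have hOM : plateOmegaMC U k = ((U:ℂ) - k ^ 2 * w) / (1 + 1 / k) := by
      rw [plateOmegaMC, ← hsdef, ← hwdef]
    have hEm : (plateOmegaMC U k - (-k ^ 2 + k / 2 + (U : ℂ) - 3 / 8)) * ((1 + 1/k) * k)
        = (-k)*(k^2*w - A) + ((3:ℂ)/8 - (U:ℂ)) := by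
      rw [hOM, hAdef]
      field_simp
      linear_combination (16*(U:ℂ)*k - 16*k^3*w) * hinv
    have t := congrArg norm hEm
    rw [norm_mul, norm_mul, ← hakdef] at t
    have hcb : ‖(3:ℂ)/8 - (U:ℂ)‖ ≤ 1/2 + |U| := by
      have hcast : ((3:ℂ)/8 - (U:ℂ)) = (((3/8 - U : ℝ)) : ℂ) := by push_cast; ring
      rw [hcast, Complex.norm_real, Real.norm_eq_abs]
      calc |3/8 - U| ≤ |(3/8:ℝ)| + |U| := abs_sub _ _
        _ ≤ 1/2 + |U| := by rw [abs_of_nonneg (by norm_num : (0:ℝ) ≤ 3/8)]; linarith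
    have hnum2 : ‖(-k)*(k^2*w - A) + ((3:ℂ)/8 - (U:ℂ))‖ ≤ B := by
      refine le_trans (norm_add_le _ _) ?_
      rw [norm_mul, norm_neg, ← hakdef, hBdef]
      linarith
    rw [← t] at hnum2
    exact plate_final_bound (norm_nonneg _) habsd hak8 hnum2 h4B hε
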